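/- Let (Ω, μ) be a finite measure space with μ(Ω) > 0 and f : Ω → (0,∞) bounded measurable and bounded away from 0, with I := ∫ f dμ. Then exp( -(n/I) ∫ f ln f dμ ) = lim_{q→∞} ( (1/I) ∫ f^(q/(q+n)) dμ )^(q+n), where n ≥ 1 is a fixed natural number. -/

import Mathlib

open MeasureTheory Filter Topology

theorem stmt_4 {Ω : Type*} [MeasurableSpace Ω] (μ : Measure Ω) [IsFiniteMeasure μ]
    (hμ : 0 < μ Set.univ) (f : Ω → ℝ) (hf : Measurable f)
    (a b : ℝ) (ha : 0 < a) (hbd : ∀ x, a ≤ f x ∧ f x ≤ b)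
    (n : ℕ) (hn : 1 ≤ n) :
    Tendsto
      (fun q : ℝ =>
        ((1 / ∫ x, f x ∂μ) * ∫ x, f x ^ (q / (q + n)) ∂μ) ^ (q + n))
      atTop
      (𝓝 (Real.exp
        (-((n : ℝ) / ∫ x, f x ∂μ) * ∫ x, f x * Real.log (f x) ∂μ))) := by
  have hfpos : ∀ x, 0 < f x := fun x => lt_of_lt_of_le ha (hbd x).1
  set I := ∫ x, f x ∂μ with hIdef
  -- bounds on log f
  set M : ℝ := max |Real.log a| |Real.log b| with hMdef
  have hM0 : 0 ≤ M := le_trans (abs_nonneg _) (le_max_left _ _)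
  have hlog : ∀ x, |Real.log (f x)| ≤ M := by
    intro x
    rw [abs_le]
    constructor
    · calc -M ≤ -|Real.log a| := neg_le_neg (le_max_left _ _)
        _ ≤ Real.log a := neg_abs_le _
        _ ≤ Real.log (f x) := Real.log_le_log ha (hbd x).1
    · calc Real.log (f x) ≤ Real.log b := Real.log_le_log (hfpos x) (hbd x).2
        _ ≤ |Real.log b| := le_abs_self _
        _ ≤ M := le_max_right _ _
  set C : ℝ := Real.exp (3 / 2 * M) with hCdef
  have hC0 : 0 < C := Real.exp_pos _
  -- uniform bound on powers
  have hpow_le : ∀ x, ∀ s : ℝ, |s| ≤ 3 / 2 → f x ^ s ≤ C := by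
    intro x s hs
    rw [Real.rpow_def_of_pos (hfpos x)]
    apply Real.exp_le_exp.2
    calc Real.log (f x) * s ≤ |Real.log (f x) * s| := le_abs_self _
      _ = |s| * |Real.log (f x)| := by rw [abs_mul, mul_comm]
      _ ≤ 3 / 2 * M := by
          apply mul_le_mul hs (hlog x) (abs_nonneg _) (by norm_num)
  have hpow_pos : ∀ x, ∀ s : ℝ, 0 < f x ^ s := fun x s => Real.rpow_pos_of_pos (hfpos x) s
  -- integrability of f
  have hfint : Integrable f μ := by
    refine Integrable.mono' (integrable_const b) hf.aestronglyMeasurable ?_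
    filter_upwards with x
    rw [Real.norm_eq_abs, abs_of_pos (hfpos x)]
    exact (hbd x).2
  have hμR : 0 < (μ Set.univ).toReal := ENNReal.toReal_pos hμ.ne' (measure_ne_top μ _)
  have hIpos : 0 < I := by
    have h1 : (0 : ℝ) < ∫ _ : Ω, a ∂μ := by
      rw [integral_const, smul_eq_mul]
      exact mul_pos hμR ha
    exact lt_of_lt_of_le h1 (integral_mono (integrable_const a) hfint fun x => (hbd x).1)
  -- integrability of powers
  have hpow_eq : ∀ s : ℝ, (fun x => f x ^ s) = fun x => Real.exp (Real.log (f x) * s) :=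
    fun s => funext fun x => Real.rpow_def_of_pos (hfpos x) s
  have hpow_meas' : ∀ s : ℝ, Measurable (fun x => f x ^ s) := by
    intro s
    rw [hpow_eq s]
    exact ((Real.measurable_log.comp hf).mul_const s).exp
  have hpow_meas : ∀ s : ℝ, AEStronglyMeasurable (fun x => f x ^ s) μ :=
    fun s => (hpow_meas' s).aestronglyMeasurable
  have hpow_int : ∀ s : ℝ, |s| ≤ 3 / 2 → Integrable (fun x => f x ^ s) μ := by
    intro s hs
    refine Integrable.mono' (integrable_const C) (hpow_meas s) ?_
    filter_upwards with x
    rw [Real.norm_eq_abs, abs_of_pos (hpow_pos x s)]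
    exact hpow_le x s hs
  -- derivative under the integral sign
  have hderiv : HasDerivAt (fun t : ℝ => ∫ x, f x ^ (1 - t) ∂μ)
      (∫ x, f x ^ ((1 : ℝ) - 0) * Real.log (f x) * (-1) ∂μ) 0 := by
    have key := hasDerivAt_integral_of_dominated_loc_of_deriv_le
      (F := fun (t : ℝ) (x : Ω) => f x ^ (1 - t))
      (F' := fun (t : ℝ) (x : Ω) => f x ^ (1 - t) * Real.log (f x) * (-1))
      (x₀ := (0 : ℝ)) (bound := fun _ => C * M) (s := Metric.ball (0 : ℝ) (1 / 2)) (μ := μ)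
      (Metric.ball_mem_nhds _ (by norm_num))
      (Eventually.of_forall fun t => hpow_meas _)
      (hpow_int _ (by norm_num))
      (((hpow_meas' _).mul (Real.measurable_log.comp hf)).mul measurable_const).aestronglyMeasurable
      ?_ (integrable_const _) ?_
    · exact key.2
    · filter_upwards with x t ht
      rw [Metric.mem_ball, Real.dist_eq, sub_zero] at ht
      have h1 : |1 - t| ≤ 3 / 2 := by
        rw [abs_lt] at ht
        rw [abs_le]
        constructor <;> linarith [ht.1, ht.2]
      calc ‖f x ^ (1 - t) * Real.log (f x) * (-1)‖
          = f x ^ (1 - t) * |Real.log (f x)| := by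
            rw [Real.norm_eq_abs, abs_mul, abs_mul, abs_neg, abs_one, mul_one,
              abs_of_pos (hpow_pos x _)]
        _ ≤ C * M := mul_le_mul (hpow_le x _ h1) (hlog x) (abs_nonneg _) hC0.le
    · filter_upwards with x t _
      have hinner : HasDerivAt (fun t : ℝ => 1 - t) (-1) t := by
        simpa using (hasDerivAt_id t).const_sub 1
      have houter := (Real.hasStrictDerivAt_const_rpow (hfpos x) (1 - t)).hasDerivAt
      have := houter.comp t hinner
      simpa [Function.comp_def, mul_comm, mul_assoc, mul_left_comm] using this
  -- simplify the derivative value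
  have hderiv_val : (∫ x, f x ^ ((1 : ℝ) - 0) * Real.log (f x) * (-1) ∂μ)
      = -∫ x, f x * Real.log (f x) ∂μ := by
    rw [← integral_neg]
    congr 1
    ext x
    rw [sub_zero, Real.rpow_one]
    ring
  -- the function G
  set G : ℝ → ℝ := fun t => (1 / I) * ∫ x, f x ^ (1 - t) ∂μ with hGdef
  have hG0 : G 0 = 1 := by
    have : (∫ x, f x ^ ((1 : ℝ) - 0) ∂μ) = I := by
      simp [Real.rpow_one, hIdef]
    simp only [hGdef, this]
    field_simp
  have hGderiv : HasDerivAt G ((1 / I) * -∫ x, f x * Real.log (f x) ∂μ) 0 := by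
    rw [← hderiv_val]
    exact hderiv.const_mul _
  set c : ℝ := (1 / I) * -∫ x, f x * Real.log (f x) ∂μ with hcdef
  have hlogG : HasDerivAt (fun t => Real.log (G t)) c 0 := by
    have := hGderiv.log (by rw [hG0]; norm_num)
    simpa [hG0] using this
  have hslope : Tendsto (fun t : ℝ => Real.log (G t) / t) (𝓝[≠] (0 : ℝ)) (𝓝 c) := by
    have h := hasDerivAt_iff_tendsto_slope.1 hlogG
    refine h.congr' ?_
    filter_upwards with t
    simp [slope, hG0, div_eq_inv_mul]
  -- the substitution t = n / (q + n)
  set T : ℝ → ℝ := fun q => n / (q + n) with hTdef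
  have hn0 : (0 : ℝ) < n := by exact_mod_cast hn
  have hTpos : ∀ᶠ q in atTop, 0 < T q := by
    filter_upwards [eventually_gt_atTop (0 : ℝ)] with q hq
    exact div_pos hn0 (by linarith)
  have hTtend : Tendsto T atTop (𝓝[≠] (0 : ℝ)) := by
    refine tendsto_nhdsWithin_of_tendsto_nhds_of_eventually_within _ ?_ ?_
    · exact Tendsto.div_atTop tendsto_const_nhds (tendsto_atTop_add_const_right _ _ tendsto_id)
    · filter_upwards [hTpos] with q hq
      exact ne_of_gt hq
  have hmain : Tendsto (fun q => (n : ℝ) * (Real.log (G (T q)) / T q)) atTop (𝓝 ((n : ℝ) * c)) :=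
    (hslope.comp hTtend).const_mul _
  -- identify constants
  have hconst : (n : ℝ) * c = -((n : ℝ) / I) * ∫ x, f x * Real.log (f x) ∂μ := by
    rw [hcdef]; ring
  rw [← hconst]
  have hexp := (Real.continuous_exp.tendsto _).comp hmain
  refine hexp.congr' ?_
  filter_upwards [eventually_gt_atTop (0 : ℝ)] with q hq
  have hqn : (0 : ℝ) < q + n := by linarith
  have hTq : T q = n / (q + n) := rfl
  have h1T : 1 - T q = q / (q + n) := by
    rw [hTq]
    field_simp
    ring
  have hGpos : 0 < G (T q) := by
    apply mul_pos (by positivity)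
    have h2 : (0 : ℝ) < ∫ _ : Ω, a ^ (1 - T q) ∂μ := by
      rw [integral_const, smul_eq_mul]
      exact mul_pos hμR (Real.rpow_pos_of_pos ha _)
    refine lt_of_lt_of_le h2 (integral_mono (integrable_const _) ?_ ?_)
    · apply hpow_int
      rw [h1T, abs_of_nonneg (by positivity)]
      rw [div_le_iff₀ hqn]
      linarith
    · intro x
      exact Real.rpow_le_rpow ha.le (hbd x).1 (by rw [h1T]; positivity)
  have hnT : (n : ℝ) / T q = q + n := by
    rw [hTq]
    field_simp
  have hGq : G (T q) = (1 / I) * ∫ x, f x ^ (q / (q + n)) ∂μ := by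
    rw [hGdef]
    simp only [h1T]
  show Real.exp ((n : ℝ) * (Real.log (G (T q)) / T q))
      = ((1 / I) * ∫ x, f x ^ (q / (q + n)) ∂μ) ^ (q + n)
  rw [← hGq, Real.rpow_def_of_pos hGpos]
  congr 1
  rw [mul_div_assoc' (n : ℝ), mul_comm (n : ℝ), mul_div_assoc, hnT]
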